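/- In the upper half space model of hyperbolic n-space, the hyperbolic distance from a point x = (x_1, ..., x_n) with x_n > 0 to the vertical geodesic axis {(0,...,0,t) : t > 0} equals arcosh(‖x‖ / x_n), where ‖x‖ is the Euclidean norm of x. -/

import Mathlib

/-- Inverse hyperbolic cosine. -/
noncomputable def arcosh (x : ℝ) : ℝ := Real.log (x + Real.sqrt (x ^ 2 - 1))

/-- The hyperbolic distance in the upper half space model of ℍ^{n+1}
(points of ℝ^{n+1} with positive last coordinate):
d(x,y) = arcosh(1 + (Σ (xᵢ − yᵢ)²)/(2 xₙ yₙ)). -/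
noncomputable def uhsDist (n : ℕ) (x y : EuclideanSpace ℝ (Fin (n + 1))) : ℝ :=
  arcosh (1 + (∑ i, (x i - y i) ^ 2) / (2 * x (Fin.last n) * y (Fin.last n)))

/-- The point (0, ..., 0, t) on the vertical axis. -/
noncomputable def vertAxis (n : ℕ) (t : ℝ) : EuclideanSpace ℝ (Fin (n + 1)) :=
  WithLp.toLp 2 (fun i => if i = Fin.last n then t else 0)

lemma arcosh_mono {u v : ℝ} (hu : 1 ≤ u) (huv : u ≤ v) : arcosh u ≤ arcosh v := by
  unfold arcosh
  have h1 : (0:ℝ) < u + Real.sqrt (u ^ 2 - 1) := by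
    have := Real.sqrt_nonneg (u ^ 2 - 1); linarith
  exact Real.log_le_log h1
    (add_le_add huv (Real.sqrt_le_sqrt (by nlinarith)))

lemma sum_sq_eq (n : ℕ) (x : EuclideanSpace ℝ (Fin (n + 1))) :
    ∑ i, x i ^ 2 = ‖x‖ ^ 2 := by
  rw [EuclideanSpace.norm_eq, Real.sq_sqrt (by positivity)]
  simp [sq_abs]

lemma uhsDist_vertAxis (n : ℕ) (x : EuclideanSpace ℝ (Fin (n + 1))) (t : ℝ)
    (hx : 0 < x (Fin.last n)) (ht : 0 < t) :
    uhsDist n x (vertAxis n t) =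
      arcosh ((‖x‖ ^ 2 + t ^ 2) / (2 * x (Fin.last n) * t)) := by
  unfold uhsDist vertAxis
  simp only [WithLp.ofLp_toLp, ↓reduceIte]
  congr 1
  have hs : ∑ i, (x i - if i = Fin.last n then t else 0) ^ 2
      = ∑ i, x i ^ 2 - 2 * t * x (Fin.last n) + t ^ 2 := by
    have h1 : ∑ i, (x i - if i = Fin.last n then t else 0) ^ 2
        = ∑ i, (x i ^ 2 - (if i = Fin.last n then 2 * t * x i - t ^ 2 else 0)) := by
      apply Finset.sum_congr rfl
      intro i _
      by_cases h : i = Fin.last n <;> simp [h] <;> ring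
    rw [h1, Finset.sum_sub_distrib, Finset.sum_ite_eq' Finset.univ (Fin.last n)]
    simp; ring
  rw [hs, sum_sq_eq]
  have ha : x (Fin.last n) ≠ 0 := ne_of_gt hx
  have ht' : t ≠ 0 := ne_of_gt ht
  field_simp
  ring

/-- In the upper half space model, the distance from a point x with
x_n > 0 to the vertical axis {(0,...,0,t) : t > 0} (the infimum of distances to
its points) equals arcosh(‖x‖ / x_n). -/
theorem dist_to_vertical_axis (n : ℕ) (x : EuclideanSpace ℝ (Fin (n + 1)))
    (hx : 0 < x (Fin.last n)) :
    sInf ((fun t => uhsDist n x (vertAxis n t)) '' Set.Ioi (0 : ℝ)) =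
      arcosh (‖x‖ / x (Fin.last n)) := by
  set a := x (Fin.last n) with ha
  have hax : a ≤ ‖x‖ := by
    calc a ≤ |x (Fin.last n)| := le_abs_self _
    _ ≤ ‖x‖ := by
        rw [← Real.sqrt_sq_eq_abs, EuclideanSpace.norm_eq]
        apply Real.sqrt_le_sqrt
        have := Finset.single_le_sum (f := fun i => ‖x i‖ ^ 2)
          (fun (i : Fin (n+1)) _ => by positivity) (Finset.mem_univ (Fin.last n))
        simpa [Real.norm_eq_abs, sq_abs] using this
  have hxnorm : 0 < ‖x‖ := lt_of_lt_of_le hx hax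
  have hone : 1 ≤ ‖x‖ / a := (one_le_div hx).mpr hax
  -- lower bound: every element of the set is ≥ arcosh (‖x‖ / a)
  have hlb : ∀ y ∈ (fun t => uhsDist n x (vertAxis n t)) '' Set.Ioi (0 : ℝ),
      arcosh (‖x‖ / a) ≤ y := by
    rintro y ⟨t, ht, rfl⟩
    simp only []
    rw [uhsDist_vertAxis n x t hx ht]
    apply arcosh_mono hone
    have ht' : (0:ℝ) < t := ht
    rw [div_le_div_iff₀ hx (by positivity : (0:ℝ) < 2 * x (Fin.last n) * t)]
    nlinarith [sq_nonneg (‖x‖ - t)]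
  apply le_antisymm
  · apply csInf_le ⟨arcosh (‖x‖ / a), hlb⟩
    refine ⟨‖x‖, hxnorm, ?_⟩
    simp only []
    rw [uhsDist_vertAxis n x ‖x‖ hx hxnorm]
    congr 1
    rw [← ha]
    field_simp
    ring
  · exact le_csInf ⟨_, ⟨‖x‖, hxnorm, rfl⟩⟩ hlb
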